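/- Let n ≥ 3 and P = ℚ[X₁,…,X_{2n}]. Let 𝔟⁺ be the ideal of P generated by all Xᵢ² (i = 1,…,2n) and all e_{n−1}(Xᵢ : i ∈ {1} ∪ T) for subsets T ⊆ {2,…,2n} with |T| = n−1, where e_{n−1} is the elementary symmetric polynomial of degree n−1. Then for every subset J ⊆ {2,…,2n} with |J| = n−1, the element ∏_{j∈J} X_j + X₁ · ∑_{j∈J} ∏_{j'∈J∖{j}} X_{j'} lies in 𝔟⁺. -/

import Mathlib

open MvPolynomial Finset

noncomputable section

/-- e_j(Xᵢ : i ∈ I), the elementary symmetric polynomial in the variables indexed by I. -/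
def esF {N : ℕ} (I : Finset (Fin N)) (j : ℕ) : MvPolynomial (Fin N) ℚ :=
  ∑ J ∈ powersetCard j I, ∏ i ∈ J, X i

lemma powersetCard_pred {N : ℕ} (J : Finset (Fin N)) (k : ℕ) (hk : J.card = k + 1) :
    powersetCard k J = J.image (fun j => J.erase j) := by
  ext S
  simp only [mem_powersetCard, mem_image]
  constructor
  · rintro ⟨hS, hcard⟩
    have : (J \ S).Nonempty := by
      rw [← Finset.card_pos, card_sdiff_of_subset hS, hk, hcard]; omega
    obtain ⟨j, hj⟩ := this
    rw [mem_sdiff] at hj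
    refine ⟨j, hj.1, ?_⟩
    refine (Finset.eq_of_subset_of_card_le (fun x hx => mem_erase.2 ⟨?_, hS hx⟩) ?_).symm
    · rintro rfl; exact hj.2 hx
    · rw [card_erase_of_mem hj.1, hk, hcard]; omega
  · rintro ⟨j, hj, rfl⟩
    exact ⟨erase_subset _ _, by rw [card_erase_of_mem hj, hk]; omega⟩

lemma esF_insert {N : ℕ} (a : Fin N) (J : Finset (Fin N)) (ha : a ∉ J) (k : ℕ)
    (hk : J.card = k + 1) :
    esF (insert a J) (k + 1)
      = (∏ j ∈ J, X j) + X a * ∑ j ∈ J, ∏ j' ∈ J.erase j, X j' := by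
  unfold esF
  rw [Finset.powersetCard_succ_insert ha, Finset.sum_union]
  · congr 1
    · rw [Nat.succ_eq_add_one, ← hk, Finset.powersetCard_self, Finset.sum_singleton]
    · rw [Finset.sum_image, Finset.mul_sum]
      · rw [powersetCard_pred J k hk, Finset.sum_image]
        · refine Finset.sum_congr rfl fun S hS => ?_
          rw [Finset.prod_insert]
          intro haS
          exact ha (Finset.erase_subset _ _ haS)
        · intro x hx y hy hxy
          by_contra hne
          have : x ∈ J.erase y := Finset.mem_erase.2 ⟨hne, hx⟩
          rw [show J.erase y = J.erase x from hxy.symm] at this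
          exact (Finset.mem_erase.1 this).1 rfl
      · intro x hx y hy hxy
        have hxJ := (Finset.mem_powersetCard.1 hx).1
        have hyJ := (Finset.mem_powersetCard.1 hy).1
        have : (insert a x).erase a = (insert a y).erase a := by rw [hxy]
        rwa [Finset.erase_insert (fun h => ha (hxJ h)),
          Finset.erase_insert (fun h => ha (hyJ h))] at this
  · rw [Finset.disjoint_left]
    intro S hS hS'
    have hSJ := (Finset.mem_powersetCard.1 hS).1
    obtain ⟨T, hT, rfl⟩ := Finset.mem_image.1 hS'
    exact ha (hSJ (Finset.mem_insert_self a T))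

/-- Step in the proof of Theorem 6.1: in ℬ⁺ every square-free monomial X_J with
J ⊆ {2,…,2n}, |J| = n−1, equals −X₁·∑_{j∈J} X_{J∖{j}}. -/
theorem stmt16 (n : ℕ) (hn : 3 ≤ n)
    (b : Ideal (MvPolynomial (Fin (2 * n)) ℚ))
    (hb : b = Ideal.span
      ({f | ∃ i : Fin (2 * n), f = X i ^ 2} ∪
       {f | ∃ T : Finset (Fin (2 * n)), (⟨0, by omega⟩ : Fin (2 * n)) ∉ T ∧ T.card = n - 1 ∧
          f = esF (insert (⟨0, by omega⟩ : Fin (2 * n)) T) (n - 1)})) :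
    ∀ J : Finset (Fin (2 * n)), (⟨0, by omega⟩ : Fin (2 * n)) ∉ J → J.card = n - 1 →
      ((∏ j ∈ J, X j) +
        X (⟨0, by omega⟩ : Fin (2 * n)) * ∑ j ∈ J, ∏ j' ∈ J.erase j, X j' :
          MvPolynomial (Fin (2 * n)) ℚ) ∈ b := by
  intro J hJ hcard
  subst hb
  apply Ideal.subset_span
  right
  refine ⟨J, hJ, hcard, ?_⟩
  have h1 : n - 1 = (n - 2) + 1 := by omega
  rw [h1, esF_insert _ J hJ (n - 2) (by omega)]

end
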